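/- Let P : [t0,∞) → End(ℂ^{d×d}) be continuously differentiable with P(t)² = P(t) for all t, let Q(t) = I − P(t), and let U : [t0,∞) → End(ℂ^{d×d}) satisfy dU/dt = λ L(t) U(t), U(t0) = I, for continuous L. Suppose at time t the superoperator P(t)U(t)P(t), restricted appropriately, admits a pseudo-inverse (P(t)U(t)P(t))^{(-1)} with (P(t)U(t)P(t))^{(-1)}(P(t)U(t)P(t)) = P(t). Then the projected propagator satisfies d/dt (P(t)U(t)) = K(t) P(t) U(t) + I(t) Q(t), where K(t) = (Ṗ(t)U(t)P(t) + P(t)U̇(t)P(t))(P(t)U(t)P(t))^{(-1)} and I(t) = Ṗ(t)U(t)Q(t) + P(t)U̇(t)Q(t) − K(t)P(t)U(t)Q(t). -/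

import Mathlib

noncomputable section
open Matrix

attribute [local instance] Matrix.frobeniusNormedAddCommGroup Matrix.frobeniusNormedSpace

instance stmt0_continuousSMul_real {d : ℕ} :
    ContinuousSMul ℝ (Matrix (Fin d) (Fin d) ℂ →L[ℂ] Matrix (Fin d) (Fin d) ℂ) :=
  IsScalarTower.continuousSMul ℂ

/-- time-local master equation for the projected propagator with a time-dependent
projector.  `P` is a continuously differentiable family of idempotent superoperators on
`[t0,∞)`, `Q = I - P`, `U` is the propagator of `dU/dt = λ L(t) U(t)`, `U t0 = I`, and at the
fixed time `t` the superoperator `P(t)U(t)P(t)` admits a pseudo-inverse `Pinv` with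
`Pinv ∘ (P(t)U(t)P(t)) = P(t)`.  Then `d/dt (P(t)U(t)) = K(t) P(t) U(t) + I(t) Q(t)` with
`K(t) = (Ṗ(t)U(t)P(t) + P(t)U̇(t)P(t)) (P(t)U(t)P(t))⁻¹` and
`I(t) = Ṗ(t)U(t)Q(t) + P(t)U̇(t)Q(t) − K(t)P(t)U(t)Q(t)`. -/

private lemma key_ring {R : Type*} [Ring R] (p p' u v pi k i q : R)
    (hpp : p * p = p) (hpi : pi * (p * (u * p)) = p)
    (hk : k = (p' * (u * p) + p * (v * p)) * pi)
    (hq : q = 1 - p)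
    (hi : i = p' * (u * q) + p * (v * q) - k * (p * (u * q))) :
    k * (p * u) + i * q = p' * u + p * v := by
  subst hq hi
  have h1 : k * (p * (u * p)) = p' * (u * p) + p * (v * p) := by
    rw [hk, mul_assoc, hpi]
    simp [add_mul, mul_assoc, hpp]
  have h2 : p' * (u * (1 - p)) + p * (v * (1 - p)) - k * (p * (u * (1 - p)))
      = (p' * u + p * v - k * (p * u)) - ((p' * (u * p) + p * (v * p)) - k * (p * (u * p))) := by
    noncomm_ring
  rw [h2, h1, sub_self, sub_zero]
  have h3 : (p' * u + p * v - k * (p * u)) * (1 - p)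
      = (p' * u + p * v - k * (p * u)) - ((p' * (u * p) + p * (v * p)) - k * (p * (u * p))) := by
    noncomm_ring
  rw [h3, h1, sub_self, sub_zero]
  noncomm_ring

theorem stmt_0 {d : ℕ} (t0 lam : ℝ)
    (L P P' U : ℝ → (Matrix (Fin d) (Fin d) ℂ →L[ℂ] Matrix (Fin d) (Fin d) ℂ))
    (hL : Continuous L)
    (hP : ∀ s ∈ Set.Ici t0, HasDerivWithinAt P (P' s) (Set.Ici t0) s)
    (hP' : ContinuousOn P' (Set.Ici t0))
    (hidem : ∀ s ∈ Set.Ici t0, (P s).comp (P s) = P s)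
    (hU : ∀ s ∈ Set.Ici t0,
      HasDerivWithinAt U (lam • ((L s).comp (U s))) (Set.Ici t0) s)
    (hU0 : U t0 = ContinuousLinearMap.id ℂ (Matrix (Fin d) (Fin d) ℂ))
    (t : ℝ) (ht : t ∈ Set.Ici t0)
    (Q : ℝ → (Matrix (Fin d) (Fin d) ℂ →L[ℂ] Matrix (Fin d) (Fin d) ℂ))
    (hQ : ∀ s, Q s = ContinuousLinearMap.id ℂ (Matrix (Fin d) (Fin d) ℂ) - P s)
    -- the time derivative of the propagator at time `t`
    (Udot : Matrix (Fin d) (Fin d) ℂ →L[ℂ] Matrix (Fin d) (Fin d) ℂ)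
    (hUdot : Udot = lam • ((L t).comp (U t)))
    -- pseudo-inverse of `P(t)U(t)P(t)`
    (Pinv : Matrix (Fin d) (Fin d) ℂ →L[ℂ] Matrix (Fin d) (Fin d) ℂ)
    (hPinv : Pinv.comp ((P t).comp ((U t).comp (P t))) = P t)
    (K Iop : Matrix (Fin d) (Fin d) ℂ →L[ℂ] Matrix (Fin d) (Fin d) ℂ)
    (hK : K = ((P' t).comp ((U t).comp (P t))
      + (P t).comp (Udot.comp (P t))).comp Pinv)
    (hI : Iop = (P' t).comp ((U t).comp (Q t)) + (P t).comp (Udot.comp (Q t))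
      - K.comp ((P t).comp ((U t).comp (Q t)))) :
    HasDerivWithinAt (fun s => (P s).comp (U s))
      (K.comp ((P t).comp (U t)) + Iop.comp (Q t)) (Set.Ici t0) t := by
  letI : NormedRing (Matrix (Fin d) (Fin d) ℂ →L[ℂ] Matrix (Fin d) (Fin d) ℂ) :=
    ContinuousLinearMap.toNormedRing
  letI : NormedAlgebra ℂ (Matrix (Fin d) (Fin d) ℂ →L[ℂ] Matrix (Fin d) (Fin d) ℂ) :=
    ContinuousLinearMap.toNormedAlgebra
  letI : NormedAlgebra ℝ (Matrix (Fin d) (Fin d) ℂ →L[ℂ] Matrix (Fin d) (Fin d) ℂ) :=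
    NormedAlgebra.restrictScalars ℝ ℂ _
  have hder : HasDerivWithinAt (fun s => P s * U s)
      (P' t * U t + P t * Udot) (Set.Ici t0) t := by
    rw [hUdot]
    exact (hP t ht).mul (hU t ht)
  have heq : K.comp ((P t).comp (U t)) + Iop.comp (Q t)
      = (P' t).comp (U t) + (P t).comp Udot := by
    simp only [← ContinuousLinearMap.mul_def] at *
    exact key_ring (P t) (P' t) (U t) Udot Pinv K Iop (Q t) (hidem t ht) hPinv hK
      (by rw [hQ t]; rfl) hI
  rw [heq]
  exact hder
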